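/- arXiv:1704.08072 — 4 statements merged into one kernel-verified Lean document; each statement's English description precedes it below -/
import Mathlib

section
/- If x ∈ ℝ^n is a solution of x = α R(x ⊗ x) + (1-α)v, then 1ᵀx = 1 or 1ᵀx = (1-α)/α. -/
noncomputable def Gmap (n : ℕ) (α : ℝ) (v : Fin n → ℝ)
    (R : Matrix (Fin n) (Fin n × Fin n) ℝ) (x : Fin n → ℝ) : Fin n → ℝ :=
  α • R.mulVec (fun p => x p.1 * x p.2) + (1 - α) • v

theorem stmt_1 (n : ℕ) (hn : 1 ≤ n) (α : ℝ) (hα : α ∈ Set.Ioo (0:ℝ) 1)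
    (v : Fin n → ℝ) (hv : ∀ i, 0 ≤ v i) (hv1 : ∑ i, v i = 1)
    (R : Matrix (Fin n) (Fin n × Fin n) ℝ) (hR : ∀ i j, 0 ≤ R i j)
    (hRs : ∀ j, ∑ i, R i j = 1)
    (x : Fin n → ℝ) (hx : Gmap n α v R x = x) :
    (∑ i, x i) = 1 ∨ (∑ i, x i) = (1 - α) / α := by
  set s := ∑ i, x i with hs
  have hsum : ∀ i, α * (∑ p : Fin n × Fin n, R i p * (x p.1 * x p.2)) + (1 - α) * v i = x i := by
    intro i
    have := congrFun hx i
    simpa [Gmap, Matrix.mulVec, dotProduct] using this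
  have key : α * s ^ 2 + (1 - α) = s := by
    have h1 : ∑ i, (α * (∑ p : Fin n × Fin n, R i p * (x p.1 * x p.2)) + (1 - α) * v i) = s := by
      rw [hs]; exact Finset.sum_congr rfl fun i _ => hsum i
    rw [Finset.sum_add_distrib, ← Finset.mul_sum, ← Finset.mul_sum, hv1, mul_one,
      Finset.sum_comm] at h1
    have h2 : ∑ p : Fin n × Fin n, ∑ i, R i p * (x p.1 * x p.2) = s ^ 2 := by
      have : ∀ p : Fin n × Fin n, ∑ i, R i p * (x p.1 * x p.2) = x p.1 * x p.2 := by
        intro p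
        rw [← Finset.sum_mul, hRs p, one_mul]
      rw [Finset.sum_congr rfl fun p _ => this p]
      rw [Fintype.sum_prod_type, hs]
      rw [sq, Finset.sum_mul_sum]
    rw [h2] at h1
    exact h1
  have hfac : (s - 1) * (α * s - (1 - α)) = 0 := by ring_nf; nlinarith [key]
  rcases mul_eq_zero.1 hfac with h | h
  · left; linarith
  · right
    have hα0 : α ≠ 0 := ne_of_gt hα.1
    field_simp
    linarith
end

section
/- If α ≤ 1/2, then the minimal nonnegative solution m of x = G(x) satisfies 1ᵀm = 1; in particular m is stochastic. -/
lemma Gmap_apply (n : ℕ) (α : ℝ) (v : Fin n → ℝ)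
    (R : Matrix (Fin n) (Fin n × Fin n) ℝ) (x : Fin n → ℝ) (i : Fin n) :
    Gmap n α v R x i = α * (∑ j, R i j * (x j.1 * x j.2)) + (1 - α) * v i := by
  simp [Gmap, Matrix.mulVec, dotProduct]

lemma Gmap_sum (n : ℕ) (α : ℝ) (v : Fin n → ℝ) (hv1 : ∑ i, v i = 1)
    (R : Matrix (Fin n) (Fin n × Fin n) ℝ) (hRs : ∀ j, ∑ i, R i j = 1)
    (x : Fin n → ℝ) :
    ∑ i, Gmap n α v R x i = α * (∑ i, x i)^2 + (1 - α) := by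
  simp only [Gmap_apply]
  rw [Finset.sum_add_distrib, ← Finset.mul_sum, ← Finset.mul_sum, hv1, mul_one]
  congr 1
  rw [Finset.sum_comm]
  have h1 : ∀ j : Fin n × Fin n, ∑ i, R i j * (x j.1 * x j.2) = x j.1 * x j.2 := by
    intro j; rw [← Finset.sum_mul, hRs, one_mul]
  rw [Finset.sum_congr rfl (fun j _ => h1 j)]
  rw [sq, Finset.sum_mul_sum]
  rw [Fintype.sum_prod_type]

lemma Gmap_nonneg (n : ℕ) (α : ℝ) (hα0 : 0 ≤ α) (hα1 : α ≤ 1) (v : Fin n → ℝ)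
    (hv : ∀ i, 0 ≤ v i)
    (R : Matrix (Fin n) (Fin n × Fin n) ℝ) (hR : ∀ i j, 0 ≤ R i j)
    (x : Fin n → ℝ) (hx : ∀ i, 0 ≤ x i) (i : Fin n) :
    0 ≤ Gmap n α v R x i := by
  rw [Gmap_apply]
  have : 0 ≤ ∑ j : Fin n × Fin n, R i j * (x j.1 * x j.2) :=
    Finset.sum_nonneg fun j _ => mul_nonneg (hR i j) (mul_nonneg (hx j.1) (hx j.2))
  have h1 : 0 ≤ 1 - α := by linarith
  exact add_nonneg (mul_nonneg hα0 this) (mul_nonneg h1 (hv i))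

lemma Gmap_mono (n : ℕ) (α : ℝ) (hα0 : 0 ≤ α) (v : Fin n → ℝ)
    (R : Matrix (Fin n) (Fin n × Fin n) ℝ) (hR : ∀ i j, 0 ≤ R i j)
    (a b : Fin n → ℝ) (ha : ∀ i, 0 ≤ a i) (hab : ∀ i, a i ≤ b i) (i : Fin n) :
    Gmap n α v R a i ≤ Gmap n α v R b i := by
  rw [Gmap_apply, Gmap_apply]
  have : ∑ j : Fin n × Fin n, R i j * (a j.1 * a j.2)
      ≤ ∑ j : Fin n × Fin n, R i j * (b j.1 * b j.2) := by
    refine Finset.sum_le_sum fun j _ => ?_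
    refine mul_le_mul_of_nonneg_left ?_ (hR i j)
    exact mul_le_mul (hab j.1) (hab j.2) (ha j.2) ((ha j.1).trans (hab j.1))
  nlinarith

lemma Gmap_continuous (n : ℕ) (α : ℝ) (v : Fin n → ℝ)
    (R : Matrix (Fin n) (Fin n × Fin n) ℝ) (i : Fin n) :
    Continuous (fun x : Fin n → ℝ => Gmap n α v R x i) := by
  simp only [Gmap_apply]
  fun_prop

theorem stmt_8 (n : ℕ) (hn : 1 ≤ n) (α : ℝ) (hα : α ∈ Set.Ioo (0:ℝ) 1)
    (hα2 : α ≤ 1 / 2)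
    (v : Fin n → ℝ) (hv : ∀ i, 0 ≤ v i) (hv1 : ∑ i, v i = 1)
    (R : Matrix (Fin n) (Fin n × Fin n) ℝ) (hR : ∀ i j, 0 ≤ R i j)
    (hRs : ∀ j, ∑ i, R i j = 1)
    (m : Fin n → ℝ) (hm0 : ∀ i, 0 ≤ m i) (hmfix : Gmap n α v R m = m)
    (hmin : ∀ z : Fin n → ℝ, (∀ i, 0 ≤ z i) → Gmap n α v R z = z → ∀ i, m i ≤ z i) :
    ∑ i, m i = 1 := by
  obtain ⟨hα0, hα1⟩ := hα
  set G := Gmap n α v R with hG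
  -- iterates from 0
  set x : ℕ → Fin n → ℝ := fun k => G^[k] 0 with hx
  have hstep : ∀ k, x (k+1) = G (x k) := by
    intro k; simp [hx, Function.iterate_succ_apply']
  have hpos : ∀ k i, 0 ≤ x k i := by
    intro k
    induction k with
    | zero => intro i; simp [hx]
    | succ k ih =>
      intro i; rw [hstep]
      exact Gmap_nonneg n α hα0.le hα1.le v hv R hR _ ih i
  have hsum : ∀ k, ∑ i, x k i ≤ 1 := by
    intro k
    induction k with
    | zero => simp [hx]
    | succ k ih =>
      rw [hstep, hG, Gmap_sum n α v hv1 R hRs]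
      have h0 : 0 ≤ ∑ i, x k i := Finset.sum_nonneg fun i _ => hpos k i
      have hsq : (∑ i, x k i)^2 ≤ 1 := by nlinarith
      nlinarith
  have hmono : ∀ k i, x k i ≤ x (k+1) i := by
    intro k
    induction k with
    | zero =>
      intro i
      have := hpos 1 i
      simpa [hx] using this
    | succ k ih =>
      intro i
      rw [hstep, hstep]
      exact Gmap_mono n α hα0.le v R hR _ _ (hpos k) ih i
  have hub : ∀ k i, x k i ≤ 1 := by
    intro k i
    calc x k i ≤ ∑ j, x k j :=
          Finset.single_le_sum (fun j _ => hpos k j) (Finset.mem_univ i)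
      _ ≤ 1 := hsum k
  set z : Fin n → ℝ := fun i => ⨆ k, x k i with hz
  have hbdd : ∀ i, BddAbove (Set.range fun k => x k i) :=
    fun i => ⟨1, by rintro _ ⟨k, rfl⟩; exact hub k i⟩
  have htend : ∀ i, Filter.Tendsto (fun k => x k i) Filter.atTop (nhds (z i)) := by
    intro i
    exact tendsto_atTop_ciSup (monotone_nat_of_le_succ fun k => hmono k i) (hbdd i)
  have hz0 : ∀ i, 0 ≤ z i := by
    intro i
    have := le_ciSup (hbdd i) 0
    simpa [hx] using this
  have htendz : Filter.Tendsto x Filter.atTop (nhds z) := by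
    rw [tendsto_pi_nhds]; exact htend
  have hfixz : G z = z := by
    funext i
    have h1 : Filter.Tendsto (fun k => G (x k) i) Filter.atTop (nhds (G z i)) :=
      ((Gmap_continuous n α v R i).continuousAt.tendsto.comp htendz)
    have h2 : Filter.Tendsto (fun k => G (x k) i) Filter.atTop (nhds (z i)) := by
      have := (htend i).comp (Filter.tendsto_add_atTop_nat 1)
      simpa [Function.comp_def, hstep] using this
    exact tendsto_nhds_unique h1 h2
  have hsumz : ∑ i, z i ≤ 1 := by
    have h1 : Filter.Tendsto (fun k => ∑ i, x k i) Filter.atTop (nhds (∑ i, z i)) :=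
      tendsto_finset_sum _ fun i _ => htend i
    exact le_of_tendsto h1 (Filter.Eventually.of_forall hsum)
  have hmz : ∀ i, m i ≤ z i := hmin z hz0 hfixz
  have hsm : ∑ i, m i ≤ 1 :=
    le_trans (Finset.sum_le_sum fun i _ => hmz i) hsumz
  -- quadratic equation for s = ∑ m
  have hq : α * (∑ i, m i)^2 + (1 - α) = ∑ i, m i := by
    conv_rhs => rw [← hmfix]
    rw [Gmap_sum n α v hv1 R hRs]
  have hs0 : 0 ≤ ∑ i, m i := Finset.sum_nonneg fun i _ => hm0 i
  nlinarith [sq_nonneg (1 - ∑ i, m i), mul_nonneg (sub_nonneg.2 hsm) (sub_nonneg.2 hα2)]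
end

section
/- Suppose x_k ≥ 0 satisfies 1ᵀx_k > 1 and x_{k+1} = G(x_k) for all k, with α ∈ (1/2, 1). Then the sequence of sums 1ᵀx_k tends to +∞, so the iteration diverges. -/
theorem stmt_12 (n : ℕ) (hn : 1 ≤ n) (α : ℝ) (hα : α ∈ Set.Ioo (1/2 : ℝ) 1)
    (v : Fin n → ℝ) (hv : ∀ i, 0 ≤ v i) (hv1 : ∑ i, v i = 1)
    (R : Matrix (Fin n) (Fin n × Fin n) ℝ) (hR : ∀ i j, 0 ≤ R i j)
    (hRs : ∀ j, ∑ i, R i j = 1)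
    (x : ℕ → Fin n → ℝ) (hx0 : ∀ k i, 0 ≤ x k i)
    (hsum : ∀ k, 1 < ∑ i, x k i)
    (hrec : ∀ k, x (k + 1) = Gmap n α v R (x k)) :
    Filter.Tendsto (fun k => ∑ i, x k i) Filter.atTop Filter.atTop := by
  obtain ⟨hα1, hα2⟩ := hα
  set s : ℕ → ℝ := fun k => ∑ i, x k i with hs
  have hsum' : ∀ k, 1 < s k := hsum
  have hstep : ∀ k, s (k + 1) = α * (s k) ^ 2 + (1 - α) := by
    intro k
    have : s (k + 1) = ∑ i, (α * (R.mulVec (fun p => x k p.1 * x k p.2)) i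
        + (1 - α) * v i) := by
      simp only [hs, hrec k, Gmap, Pi.add_apply, Pi.smul_apply, smul_eq_mul]
    rw [this, Finset.sum_add_distrib, ← Finset.mul_sum, ← Finset.mul_sum, hv1]
    have hRe : ∑ i, (R.mulVec (fun p => x k p.1 * x k p.2)) i
        = ∑ p : Fin n × Fin n, x k p.1 * x k p.2 := by
      simp only [Matrix.mulVec, dotProduct]
      rw [Finset.sum_comm]
      congr 1
      ext p
      rw [← Finset.sum_mul, hRs p, one_mul]
    rw [hRe]
    have : ∑ p : Fin n × Fin n, x k p.1 * x k p.2 = (s k) ^ 2 := by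
      rw [Fintype.sum_prod_type, sq]
      rw [Finset.sum_mul_sum]
    rw [this]
    ring
  set c : ℝ := (s 0 - 1) * (2 * α - 1) with hc
  have hc0 : 0 < c := by
    apply mul_pos (by linarith [hsum' 0]) (by linarith)
  have hmono : ∀ k, s k ≤ s (k + 1) := by
    intro k
    rw [hstep k]
    nlinarith [hsum' k, sq_nonneg (s k - 1)]
  have hmono' : ∀ k, s 0 ≤ s k := by
    intro k
    induction k with
    | zero => exact le_rfl
    | succ m ih => exact le_trans ih (hmono m)
  have hstep' : ∀ k, s k + c ≤ s (k + 1) := by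
    intro k
    rw [hstep k]
    have h1 : 1 < s k := hsum' k
    have h0 : s 0 ≤ s k := hmono' k
    have : α * (s k) ^ 2 + (1 - α) - s k = (s k - 1) * (α * s k - (1 - α)) := by
      ring
    nlinarith [sq_nonneg (s k - s 0)]
  have hlin : ∀ k, s 0 + k * c ≤ s k := by
    intro k
    induction k with
    | zero => simp
    | succ m ih =>
      have := hstep' m
      push_cast
      linarith
  have htend : Filter.Tendsto (fun k : ℕ => s 0 + k * c) Filter.atTop Filter.atTop := by
    apply Filter.tendsto_atTop_add_const_left
    exact Filter.Tendsto.atTop_mul_const hc0 tendsto_natCast_atTop_atTop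
  exact Filter.tendsto_atTop_mono hlin htend
end

section
/- If s is a stochastic solution (1ᵀs = 1, s ≥ m) and y = s - m, then y = ((2α-1)/α) · w where w is the Perron vector of the column-stochastic irreducible matrix P_y = α R(y ⊗ I) + G'_m normalized so that 1ᵀw = 1; equivalently, P_y y = y and 1ᵀy = (2α-1)/α. -/
/-- `w ⊗ I_n` as an `n² × n` matrix. -/
noncomputable def kronL (n : ℕ) (w : Fin n → ℝ) : Matrix (Fin n × Fin n) (Fin n) ℝ :=
  fun p k => w p.1 * (if p.2 = k then 1 else 0)

/-- `I_n ⊗ w` as an `n² × n` matrix. -/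
noncomputable def kronR (n : ℕ) (w : Fin n → ℝ) : Matrix (Fin n × Fin n) (Fin n) ℝ :=
  fun p k => (if p.1 = k then 1 else 0) * w p.2

/-- `G'_w = α R (w ⊗ I) + α R (I ⊗ w)`. -/
noncomputable def Gprime (n : ℕ) (α : ℝ) (R : Matrix (Fin n) (Fin n × Fin n) ℝ)
    (w : Fin n → ℝ) : Matrix (Fin n) (Fin n) ℝ :=
  α • (R * kronL n w) + α • (R * kronR n w)

lemma kronL_mulVec (n : ℕ) (R : Matrix (Fin n) (Fin n × Fin n) ℝ)
    (w x : Fin n → ℝ) :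
    (R * kronL n w).mulVec x = R.mulVec (fun p => w p.1 * x p.2) := by
  funext i
  simp only [Matrix.mulVec, Matrix.mul_apply, dotProduct, kronL, Finset.sum_mul,
    mul_ite, mul_one, mul_zero, ite_mul, zero_mul]
  rw [Finset.sum_comm]
  refine Finset.sum_congr rfl fun p _ => ?_
  simp [Finset.sum_ite_eq, mul_assoc]

lemma kronR_mulVec (n : ℕ) (R : Matrix (Fin n) (Fin n × Fin n) ℝ)
    (w x : Fin n → ℝ) :
    (R * kronR n w).mulVec x = R.mulVec (fun p => x p.1 * w p.2) := by
  funext i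
  simp only [Matrix.mulVec, Matrix.mul_apply, dotProduct, kronR, Finset.sum_mul,
    mul_ite, mul_one, mul_zero, ite_mul, zero_mul]
  rw [Finset.sum_comm]
  refine Finset.sum_congr rfl fun p _ => ?_
  simp [Finset.sum_ite_eq, mul_comm, mul_assoc, mul_left_comm]

theorem stmt_16 (n : ℕ) (hn : 1 ≤ n) (α : ℝ) (hα : α ∈ Set.Ioo (1/2 : ℝ) 1)
    (v : Fin n → ℝ) (hv : ∀ i, 0 ≤ v i) (hv1 : ∑ i, v i = 1)
    (R : Matrix (Fin n) (Fin n × Fin n) ℝ) (hR : ∀ i j, 0 ≤ R i j)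
    (hRs : ∀ j, ∑ i, R i j = 1)
    (m : Fin n → ℝ) (hm0 : ∀ i, 0 ≤ m i) (hmfix : Gmap n α v R m = m)
    (hmin : ∀ z : Fin n → ℝ, (∀ i, 0 ≤ z i) → Gmap n α v R z = z → ∀ i, m i ≤ z i)
    (hmsum : ∑ i, m i = (1 - α) / α)
    (s : Fin n → ℝ) (hs : Gmap n α v R s = s) (hs1 : ∑ i, s i = 1)
    (hms : ∀ i, m i ≤ s i) :
    (α • (R * kronL n (s - m)) + Gprime n α R m).mulVec (s - m) = s - m ∧
    ∑ i, (s - m) i = (2 * α - 1) / α := by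
  obtain ⟨hα1, hα2⟩ := hα
  have hα0 : α ≠ 0 := by linarith
  constructor
  · have key : (α • (R * kronL n (s - m)) + Gprime n α R m).mulVec (s - m)
        = α • R.mulVec (fun p => s p.1 * s p.2) - α • R.mulVec (fun p => m p.1 * m p.2) := by
      unfold Gprime
      rw [Matrix.add_mulVec, Matrix.add_mulVec, Matrix.smul_mulVec,
        Matrix.smul_mulVec, Matrix.smul_mulVec, kronL_mulVec, kronL_mulVec,
        kronR_mulVec]
      funext i
      simp only [Pi.add_apply, Pi.sub_apply, Pi.smul_apply, smul_eq_mul, Matrix.mulVec,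
        dotProduct]
      rw [← mul_add, ← mul_add, ← mul_sub]
      congr 1
      rw [← Finset.sum_add_distrib, ← Finset.sum_add_distrib, ← Finset.sum_sub_distrib]
      refine Finset.sum_congr rfl fun p _ => ?_
      ring
    have hG : ∀ z : Fin n → ℝ, Gmap n α v R z = z →
        α • R.mulVec (fun p => z p.1 * z p.2) = z - (1 - α) • v := by
      intro z hz
      have := hz
      unfold Gmap at this
      exact eq_sub_of_add_eq this
    rw [key, hG s hs, hG m hmfix]
    abel
  · have := hs1
    simp only [Pi.sub_apply, Finset.sum_sub_distrib, hs1, hmsum]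
    field_simp
    ring
end
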